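/- arXiv:1707.06364 — 4 statements merged into one kernel-verified Lean document; each statement's English description precedes it below -/
import Mathlib

section
/- Let T be a rooted tree of depth k whose edge weights lie in (0, 4/√d], and in which every vertex has weighted degree (sum of weights of incident edges, in the ambient graph) between 1 - 4/√d and 1. Define f on vertices of T by f(root) = 1 and f(v) = √(w(parent(v), v))·f(parent(v)). Then (1 - 8/√d)^k·(k+1) ≤ Σ_v f(v)² ≤ k+1. -/
/-- On a rooted tree of depth exactly k whose edge weights lie in (0, 4/√d] and
whose vertices have ambient weighted degree in [1 - 4/√d, 1] (the children-edge weights of a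
vertex of depth < k sum to its degree minus its parent-edge weight), the function
f(root) = 1, f(v) = √(w(parent v, v)) · f(parent v) satisfies
(1 - 8/√d)^k (k+1) ≤ Σ f(v)² ≤ k+1. -/
theorem tree_test_function_norm
    {V : Type*} [Fintype V] [DecidableEq V]
    (k : ℕ) (d : ℝ) (hd : 64 < d)
    (root : V) (parent : V → V) (depth : V → ℕ)
    (hroot : depth root = 0)
    (hdepth0 : ∀ v, depth v = 0 → v = root)
    (hparent : ∀ v, v ≠ root → depth (parent v) + 1 = depth v)
    (hdepthle : ∀ v, depth v ≤ k)
    (hdepthk : ∃ v, depth v = k)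
    (wt : V → ℝ)
    (hwt : ∀ v, v ≠ root → 0 < wt v ∧ wt v ≤ 4 / Real.sqrt d)
    (w : V → ℝ)
    (hw : ∀ u, 1 - 4 / Real.sqrt d ≤ w u ∧ w u ≤ 1)
    (hchildren : ∀ u, depth u < k →
      ∑ v ∈ Finset.univ.filter (fun v => v ≠ root ∧ parent v = u), wt v
        = w u - (if u = root then 0 else wt u))
    (f : V → ℝ)
    (hf0 : f root = 1)
    (hfrec : ∀ v, v ≠ root → f v = Real.sqrt (wt v) * f (parent v)) :
    (1 - 8 / Real.sqrt d) ^ k * (k + 1 : ℝ) ≤ ∑ v, f v ^ 2 ∧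
      ∑ v, f v ^ 2 ≤ (k + 1 : ℝ) := by

  have hspos : (0:ℝ) < Real.sqrt d := Real.sqrt_pos.2 (by linarith)
  have hs8 : 8 < Real.sqrt d := by
    have : Real.sqrt 64 < Real.sqrt d := Real.sqrt_lt_sqrt (by norm_num) hd
    have h64 : Real.sqrt 64 = 8 := by
      rw [show (64:ℝ) = 8^2 by norm_num, Real.sqrt_sq (by norm_num)]
    linarith
  have hcoefpos : (0:ℝ) < 1 - 8 / Real.sqrt d := by
    have : 8 / Real.sqrt d < 1 := (div_lt_one hspos).2 hs8
    linarith
  have hcoefle1 : 1 - 8 / Real.sqrt d ≤ 1 := by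
    have : 0 ≤ 8 / Real.sqrt d := by positivity
    linarith
  have h48 : 4 / Real.sqrt d + 4 / Real.sqrt d = 8 / Real.sqrt d := by ring
  set C : ℕ → ℝ := fun ℓ => ∑ v ∈ Finset.univ.filter (fun v => depth v = ℓ), f v ^ 2 with hCdef
  have hC0 : C 0 = 1 := by
    have hset : Finset.univ.filter (fun v => depth v = 0) = {root} := by
      ext v
      simp only [Finset.mem_filter, Finset.mem_univ, true_and, Finset.mem_singleton]
      exact ⟨hdepth0 v, fun h => h ▸ hroot⟩
    simp [hCdef, hset, hf0]
  have hfsq : ∀ v, v ≠ root → f v ^ 2 = wt v * f (parent v) ^ 2 := by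
    intro v hv
    rw [hfrec v hv, mul_pow, Real.sq_sqrt (hwt v hv).1.le]
  have key : ∀ ℓ, ℓ < k → C (ℓ+1) = ∑ u ∈ Finset.univ.filter (fun u => depth u = ℓ),
      (w u - if u = root then 0 else wt u) * f u ^ 2 := by
    intro ℓ hℓ
    have h1 : C (ℓ+1) = ∑ v ∈ Finset.univ.filter (fun v => depth v = ℓ+1),
        wt v * f (parent v) ^ 2 := by
      refine Finset.sum_congr rfl ?_
      intro v hv
      simp only [Finset.mem_filter, Finset.mem_univ, true_and] at hv
      have hv' : v ≠ root := by
        intro h; rw [h, hroot] at hv; omega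
      exact hfsq v hv'
    rw [h1]
    rw [← Finset.sum_fiberwise_of_maps_to (g := parent)
      (t := Finset.univ.filter (fun u => depth u = ℓ))
      (fun v hv => by
        simp only [Finset.mem_filter, Finset.mem_univ, true_and] at hv ⊢
        have hv' : v ≠ root := fun h => by rw [h, hroot] at hv; omega
        have := hparent v hv'
        omega)]
    refine Finset.sum_congr rfl ?_
    intro u hu
    simp only [Finset.mem_filter, Finset.mem_univ, true_and] at hu
    have hfib : (Finset.univ.filter (fun v => depth v = ℓ+1)).filter (fun v => parent v = u)
        = Finset.univ.filter (fun v => v ≠ root ∧ parent v = u) := by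
      ext v
      simp only [Finset.mem_filter, Finset.mem_univ, true_and]
      constructor
      · rintro ⟨hdv, hpv⟩
        refine ⟨fun h => by rw [h, hroot] at hdv; omega, hpv⟩
      · rintro ⟨hvr, hpv⟩
        have := hparent v hvr
        rw [hpv, hu] at this
        exact ⟨this.symm, hpv⟩
    rw [hfib]
    have : ∀ v ∈ Finset.univ.filter (fun v => v ≠ root ∧ parent v = u),
        wt v * f (parent v) ^ 2 = wt v * f u ^ 2 := by
      intro v hv
      simp only [Finset.mem_filter, Finset.mem_univ, true_and] at hv
      rw [hv.2]
    rw [Finset.sum_congr rfl this, ← Finset.sum_mul, hchildren u (by omega)]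
  have hcoef : ∀ u, 1 - 8 / Real.sqrt d ≤ (w u - if u = root then 0 else wt u)
      ∧ (w u - if u = root then 0 else wt u) ≤ 1 := by
    intro u
    by_cases h : u = root
    · rw [if_pos h]
      have h0 : 0 ≤ 4 / Real.sqrt d := by positivity
      constructor
      · linarith [(hw u).1]
      · linarith [(hw u).2]
    · simp only [if_neg h]
      have h1 := hw u
      have h2 := hwt u h
      constructor <;> linarith
  have hstep_le : ∀ ℓ, ℓ < k → C (ℓ+1) ≤ C ℓ := by
    intro ℓ hℓ
    rw [key ℓ hℓ, hCdef]
    refine Finset.sum_le_sum ?_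
    intro u _
    have := (hcoef u).2
    nlinarith [sq_nonneg (f u)]
  have hstep_ge : ∀ ℓ, ℓ < k → (1 - 8 / Real.sqrt d) * C ℓ ≤ C (ℓ+1) := by
    intro ℓ hℓ
    rw [key ℓ hℓ, hCdef, Finset.mul_sum]
    refine Finset.sum_le_sum ?_
    intro u _
    have := (hcoef u).1
    nlinarith [sq_nonneg (f u)]
  have hCbound : ∀ ℓ, ℓ ≤ k → (1 - 8 / Real.sqrt d) ^ ℓ ≤ C ℓ ∧ C ℓ ≤ 1 := by
    intro ℓ
    induction ℓ with
    | zero => intro _; simp [hC0]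
    | succ n ih =>
      intro hn
      have hn' : n < k := by omega
      obtain ⟨ih1, ih2⟩ := ih (by omega)
      constructor
      · calc (1 - 8 / Real.sqrt d) ^ (n+1) = (1 - 8 / Real.sqrt d) * (1 - 8 / Real.sqrt d) ^ n := by
              ring
          _ ≤ (1 - 8 / Real.sqrt d) * C n := by
              apply mul_le_mul_of_nonneg_left ih1 hcoefpos.le
          _ ≤ C (n+1) := hstep_ge n hn'
      · calc C (n+1) ≤ C n := hstep_le n hn'
          _ ≤ 1 := ih2
  have htotal : ∑ v, f v ^ 2 = ∑ ℓ ∈ Finset.range (k+1), C ℓ := by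
    rw [hCdef]
    rw [Finset.sum_fiberwise_of_maps_to (g := depth)
      (fun v _ => Finset.mem_range.2 (Nat.lt_succ_of_le (hdepthle v)))]
  rw [htotal]
  constructor
  · have : (1 - 8 / Real.sqrt d) ^ k * (k + 1 : ℝ)
        = ∑ _ℓ ∈ Finset.range (k+1), (1 - 8 / Real.sqrt d) ^ k := by
      rw [Finset.sum_const, Finset.card_range]
      ring
    rw [this]
    refine Finset.sum_le_sum ?_
    intro ℓ hℓ
    have hℓk : ℓ ≤ k := by simpa using Nat.lt_succ_iff.1 (Finset.mem_range.1 hℓ)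
    calc (1 - 8 / Real.sqrt d) ^ k ≤ (1 - 8 / Real.sqrt d) ^ ℓ :=
          pow_le_pow_of_le_one hcoefpos.le hcoefle1 hℓk
      _ ≤ C ℓ := (hCbound ℓ hℓk).1
  · have : (k + 1 : ℝ) = ∑ _ℓ ∈ Finset.range (k+1), (1:ℝ) := by
      rw [Finset.sum_const, Finset.card_range]; ring
    rw [this]
    refine Finset.sum_le_sum ?_
    intro ℓ hℓ
    exact (hCbound ℓ (Nat.lt_succ_iff.1 (Finset.mem_range.1 hℓ))).2
end

section
/- Let A be a real symmetric n×n matrix with spectral decomposition A = Σ_j λ_j u_j u_jᵀ, and let v be a unit-norm vector satisfying ⟨v, u_j⟩² = 1/n for all j. Then for any real s, the characteristic polynomial of A + s·vvᵀ equals p(x) - (s/n)·p'(x), where p(x) = det(xI - A). -/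
open Polynomial Matrix

section RankOneUpdateHelpers


lemma derivative_finset_prod' {ι : Type*} [DecidableEq ι] {R : Type*} [CommSemiring R]
    (s : Finset ι) (f : ι → R[X]) :
    derivative (∏ i ∈ s, f i) = ∑ i ∈ s, (∏ k ∈ s.erase i, f k) * derivative (f i) := by
  classical
  induction s using Finset.induction_on with
  | empty => simp
  | @insert a s ha ih =>
    rw [Finset.prod_insert ha, derivative_mul, ih, Finset.sum_insert ha,
      Finset.erase_insert ha, Finset.mul_sum]
    congr 1
    · exact mul_comm _ _
    refine Finset.sum_congr rfl fun i hi => ?_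
    rw [Finset.erase_insert_of_ne (a := a) (b := i) (fun h => ha (h ▸ hi)),
      Finset.prod_insert (fun h => ha (Finset.mem_of_mem_erase h)), mul_assoc]

lemma det_diag_add_col_mul_row_field {K : Type*} [Field K] {n : ℕ} (d a b : Fin n → K)
    (hd : ∀ i, d i ≠ 0) :
    (Matrix.diagonal d + Matrix.replicateCol Unit a * Matrix.replicateRow Unit b).det
      = ∏ i, d i + ∑ j, a j * b j * ∏ k ∈ Finset.univ.erase j, d k := by
  have hdet : IsUnit (Matrix.diagonal d).det := by
    simp only [Matrix.det_diagonal, isUnit_iff_ne_zero, Finset.prod_ne_zero_iff]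
    exact fun i _ => hd i
  have hinv : (Matrix.diagonal d)⁻¹ = Matrix.diagonal (fun i => (d i)⁻¹) := by
    apply Matrix.inv_eq_right_inv
    rw [Matrix.diagonal_mul_diagonal, ← Matrix.diagonal_one]
    exact congrArg Matrix.diagonal (funext fun i => mul_inv_cancel₀ (hd i))
  rw [Matrix.det_add_replicateCol_mul_replicateRow hdet, hinv, Matrix.det_diagonal, Matrix.det_unique]
  have hentry : ((1 + Matrix.replicateRow Unit b * Matrix.diagonal (fun i => (d i)⁻¹) * Matrix.replicateCol Unit a :
        Matrix Unit Unit K)) default default = 1 + ∑ j, b j * (d j)⁻¹ * a j := by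
    simp [Matrix.mul_apply, Matrix.one_apply, Matrix.diagonal_apply, Finset.sum_mul, ite_mul,
      Finset.sum_ite_eq]
  rw [hentry, mul_add, mul_one, Finset.mul_sum]
  congr 1
  refine Finset.sum_congr rfl fun j _ => ?_
  rw [← Finset.mul_prod_erase _ _ (Finset.mem_univ j),
    show (d j * ∏ k ∈ Finset.univ.erase j, d k) * (b j * (d j)⁻¹ * a j)
      = (d j * (d j)⁻¹) * (a j * b j * ∏ k ∈ Finset.univ.erase j, d k) from by ring,
    mul_inv_cancel₀ (hd j), one_mul]

lemma det_diag_add_col_mul_row_poly {n : ℕ} (d a b : Fin n → ℝ[X]) (hd : ∀ i, d i ≠ 0) :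
    (Matrix.diagonal d + Matrix.replicateCol Unit a * Matrix.replicateRow Unit b).det
      = ∏ i, d i + ∑ j, a j * b j * ∏ k ∈ Finset.univ.erase j, d k := by
  set φ : ℝ[X] →+* RatFunc ℝ := (algebraMap ℝ[X] (RatFunc ℝ)) with hφdef
  have hφ : Function.Injective φ := IsFractionRing.injective _ _
  apply hφ
  rw [RingHom.map_det, RingHom.mapMatrix_apply]
  have hmap : (Matrix.diagonal d + Matrix.replicateCol Unit a * Matrix.replicateRow Unit b).map φ
      = Matrix.diagonal (φ ∘ d) + Matrix.replicateCol Unit (φ ∘ a) * Matrix.replicateRow Unit (φ ∘ b) := by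
    rw [Matrix.map_add _ (map_add φ), Matrix.diagonal_map (map_zero φ), Matrix.map_mul]
    rfl
  rw [hmap, det_diag_add_col_mul_row_field _ _ _
    (fun i => fun h => hd i (hφ (by simpa using h)))]
  simp [_root_.map_mul, map_prod, map_sum, Function.comp]

lemma charpoly_conj_orth {n : ℕ} (U M : Matrix (Fin n) (Fin n) ℝ) (hU : U * Uᵀ = 1) :
    (Uᵀ * M * U).charpoly = M.charpoly := by
  have hU' : Uᵀ * U = 1 := mul_eq_one_comm.mp hU
  have hC1 : (Uᵀ.map C) * (U.map C) = 1 := by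
    rw [← Matrix.map_mul, hU', Matrix.map_one C (map_zero C) (map_one C)]
  have hcm : charmatrix (Uᵀ * M * U) = (Uᵀ.map C) * charmatrix M * (U.map C) := by
    show Matrix.scalar (Fin n) X - (C : ℝ →+* ℝ[X]).mapMatrix (Uᵀ * M * U)
      = (Uᵀ.map C) * (Matrix.scalar (Fin n) X - (C : ℝ →+* ℝ[X]).mapMatrix M) * (U.map C)
    rw [Matrix.mul_sub, Matrix.sub_mul]
    congr 1
    · rw [Matrix.mul_assoc,
        (Matrix.scalar_commute X (fun r => Commute.all _ _) (U.map C)).eq,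
        ← Matrix.mul_assoc, hC1, Matrix.one_mul]
    · simp only [RingHom.mapMatrix_apply, Matrix.map_mul]
  rw [Matrix.charpoly, Matrix.charpoly, hcm, Matrix.det_mul, Matrix.det_mul]
  have : (Uᵀ.map C).det * (U.map C).det = 1 := by
    rw [← Matrix.det_mul, hC1, Matrix.det_one]
  calc (Uᵀ.map C).det * (charmatrix M).det * (U.map C).det
      = (charmatrix M).det * ((Uᵀ.map C).det * (U.map C).det) := by ring
    _ = (charmatrix M).det := by rw [this, mul_one]

lemma charmatrix_diagonal' {n : ℕ} (lam : Fin n → ℝ) :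
    charmatrix (Matrix.diagonal lam) = Matrix.diagonal (fun i => (X : ℝ[X]) - C (lam i)) := by
  ext i j
  rcases eq_or_ne i j with rfl | h
  · rw [charmatrix_apply_eq, Matrix.diagonal_apply_eq, Matrix.diagonal_apply_eq]
  · rw [charmatrix_apply_ne _ _ _ h, Matrix.diagonal_apply_ne _ h, Matrix.diagonal_apply_ne _ h,
      map_zero, neg_zero]

end RankOneUpdateHelpers

open Polynomial Matrix in
/-- If A is real symmetric with orthonormal eigenbasis u_j and v is a unit vector
with ⟨v, u_j⟩² = 1/n for all j, then charpoly(A + s·vvᵀ) = p(x) - (s/n)·p'(x), where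
p = charpoly(A). -/
theorem rank_one_update_charpoly
    (n : ℕ) (hn : 1 ≤ n)
    (A : Matrix (Fin n) (Fin n) ℝ) (hA : A.IsSymm)
    (lam : Fin n → ℝ) (u : Fin n → (Fin n → ℝ))
    (horth : ∀ i j, u i ⬝ᵥ u j = if i = j then (1 : ℝ) else 0)
    (hspec : A = ∑ j, lam j • Matrix.vecMulVec (u j) (u j))
    (v : Fin n → ℝ) (hv : v ⬝ᵥ v = 1)
    (hinner : ∀ j, (v ⬝ᵥ u j) ^ 2 = 1 / n)
    (s : ℝ) :
    (A + s • Matrix.vecMulVec v v).charpoly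
      = A.charpoly - Polynomial.C (s / n) * Polynomial.derivative A.charpoly := by
  classical
  set U : Matrix (Fin n) (Fin n) ℝ := Matrix.of u with hUdef
  have hUUt : U * Uᵀ = 1 := by
    ext i j
    simpa [Matrix.mul_apply, dotProduct, Matrix.one_apply, hUdef] using horth i j
  have hUtU : Uᵀ * U = 1 := mul_eq_one_comm.mp hUUt
  set w : Fin n → ℝ := U *ᵥ v with hw
  have hvw : Uᵀ *ᵥ w = v := by
    rw [hw, Matrix.mulVec_mulVec, hUtU, Matrix.one_mulVec]
  have hw2 : ∀ j, w j ^ 2 = 1 / n := by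
    intro j
    have hwj : w j = v ⬝ᵥ u j := by
      rw [hw]; exact dotProduct_comm _ _
    rw [hwj, hinner j]
  have hAconj : A = Uᵀ * Matrix.diagonal lam * U := by
    rw [hspec, Matrix.mul_assoc]
    ext i k
    simp only [Matrix.sum_apply, Matrix.smul_apply, Matrix.vecMulVec_apply, smul_eq_mul,
      Matrix.mul_apply, Matrix.diagonal_mul, Matrix.transpose_apply, Matrix.of_apply, hUdef,
      Matrix.diagonal_apply, ite_mul, zero_mul, Finset.sum_ite_eq, Finset.mem_univ, if_true]
    refine Finset.sum_congr rfl fun j _ => ?_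
    ring
  have hvv : Matrix.vecMulVec v v = Uᵀ * Matrix.vecMulVec w w * U := by
    have h1 : Uᵀ * Matrix.replicateCol Unit w = Matrix.replicateCol Unit v := by
      rw [← Matrix.replicateCol_mulVec, hvw]
    have h2 : Matrix.replicateRow Unit w * U = Matrix.replicateRow Unit v := by
      rw [← Matrix.replicateRow_vecMul, ← Matrix.mulVec_transpose, hvw]
    rw [Matrix.vecMulVec_eq Unit, Matrix.vecMulVec_eq Unit, Matrix.mul_assoc, Matrix.mul_assoc,
      h2, ← Matrix.mul_assoc, h1]
  have hconj : A + s • Matrix.vecMulVec v v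
      = Uᵀ * (Matrix.diagonal lam + s • Matrix.vecMulVec w w) * U := by
    rw [Matrix.mul_add, Matrix.add_mul, ← hAconj, hvv, Matrix.mul_smul, Matrix.smul_mul]
  rw [hconj, charpoly_conj_orth _ _ hUUt]
  have hArw : A.charpoly = (Matrix.diagonal lam).charpoly := by
    rw [hAconj, charpoly_conj_orth _ _ hUUt]
  have hdiagcp : (Matrix.diagonal lam).charpoly = ∏ i, ((X : ℝ[X]) - C (lam i)) := by
    rw [Matrix.charpoly, charmatrix_diagonal', Matrix.det_diagonal]
  rw [hArw, hdiagcp]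
  have hcm : charmatrix (Matrix.diagonal lam + s • Matrix.vecMulVec w w)
      = Matrix.diagonal (fun i => (X : ℝ[X]) - C (lam i))
        + Matrix.replicateCol Unit (fun i => C (w i)) * Matrix.replicateRow Unit (fun j => C (-s * w j)) := by
    ext i j
    rcases eq_or_ne i j with rfl | h
    · simp only [charmatrix_apply_eq, Matrix.add_apply, Matrix.diagonal_apply_eq,
        Matrix.smul_apply, Matrix.vecMulVec_apply, smul_eq_mul, Matrix.mul_apply,
        Finset.univ_unique, Finset.sum_singleton, Matrix.replicateCol_apply, Matrix.replicateRow_apply,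
        map_add, _root_.map_mul, map_neg]
      ring
    · simp only [charmatrix_apply_ne _ _ _ h, Matrix.add_apply, Matrix.diagonal_apply_ne _ h,
        Matrix.smul_apply, Matrix.vecMulVec_apply, smul_eq_mul, Matrix.mul_apply,
        Finset.univ_unique, Finset.sum_singleton, Matrix.replicateCol_apply, Matrix.replicateRow_apply,
        map_add, _root_.map_mul, map_neg, zero_add]
      ring
  rw [show (Matrix.diagonal lam + s • Matrix.vecMulVec w w).charpoly
      = (charmatrix (Matrix.diagonal lam + s • Matrix.vecMulVec w w)).det from rfl, hcm,
    det_diag_add_col_mul_row_poly _ _ _ (fun i => Polynomial.X_sub_C_ne_zero (lam i))]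
  have hterm : ∀ j, C (w j) * C (-s * w j) = -C (s / n) := by
    intro j
    rw [← _root_.map_mul, show w j * (-s * w j) = -(s * w j ^ 2) by ring, hw2 j, map_neg]
    congr 1
    rw [show s * (1 / (n : ℝ)) = s / n by ring]
  have hder : derivative (∏ i, ((X : ℝ[X]) - C (lam i)))
      = ∑ i, ∏ k ∈ Finset.univ.erase i, ((X : ℝ[X]) - C (lam k)) := by
    rw [derivative_finset_prod']
    simp
  rw [hder, sub_eq_add_neg]
  congr 1
  rw [Finset.mul_sum, ← Finset.sum_neg_distrib]
  exact Finset.sum_congr rfl fun j _ => by rw [hterm j]; ring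
end

section
/- For a positive real α and positive integers n ≤ T, the polynomial (1 - αD)^T x^n equals α^n · n! · L_n^{(T-n)}(x/α) up to the standard normalization, i.e., (1 - αD)^T x^n = (-α)^n n! · L_n^{(T-n)}(x/α) where L_n^{(β)} is the associated (generalized) Laguerre polynomial of degree n and parameter β = T - n; in particular its roots are α times the roots of L_n^{(T-n)}. -/
open Polynomial

/-- The generalized (associated) Laguerre polynomial
`L_n^{(β)}(x) = Σ_{j=0}^n (-1)^j · C(n+β, n-j) · x^j / j!` as a real polynomial. -/
noncomputable def genLaguerre (n β : ℕ) : Polynomial ℝ :=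
  ∑ j ∈ Finset.range (n + 1),
    Polynomial.C ((-1 : ℝ) ^ j * (Nat.choose (n + β) (n - j) : ℝ) / (Nat.factorial j : ℝ)) *
      Polynomial.X ^ j

private lemma aux_pow (α : ℝ) (m : ℕ) (p : Polynomial ℝ) :
    ((-(α • (Polynomial.derivative : Polynomial ℝ →ₗ[ℝ] Polynomial ℝ))) ^ m) p
      = (-α) ^ m • Polynomial.derivative^[m] p := by
  induction m generalizing p with
  | zero => simp
  | succ m ih =>
    rw [pow_succ', Module.End.mul_apply, LinearMap.neg_apply, LinearMap.smul_apply, ih,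
      map_smul, Function.iterate_succ_apply', pow_succ', smul_smul, neg_mul, neg_smul]

private lemma aux_term (α : ℝ) (T n m : ℕ) :
    ((-(α • (Polynomial.derivative : Polynomial ℝ →ₗ[ℝ] Polynomial ℝ))) ^ m * 1 ^ (T - m)
        * (T.choose m : Module.End ℝ (Polynomial ℝ))) (X ^ n : Polynomial ℝ)
    = C ((T.choose m : ℝ) * (-α) ^ m * (n.descFactorial m : ℝ)) * X ^ (n - m) := by
  rw [one_pow, mul_one, Module.End.mul_apply, Module.End.natCast_apply, map_nsmul, aux_pow,
    Polynomial.iterate_derivative_X_pow_eq_smul]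
  simp [Polynomial.smul_eq_C_mul, smul_smul, mul_comm, mul_assoc, mul_left_comm]

/-- For α > 0 and 1 ≤ n ≤ T,
`(1 - αD)^T xⁿ = (-α)ⁿ · n! · L_n^{(T-n)}(x/α)`. -/
theorem iterated_operator_is_laguerre
    (α : ℝ) (hα : 0 < α) (n T : ℕ) (hn : 1 ≤ n) (hnT : n ≤ T) :
    (fun p : Polynomial ℝ => p - Polynomial.C α * Polynomial.derivative p)^[T]
        (Polynomial.X ^ n)
      = Polynomial.C ((-α) ^ n * (Nat.factorial n : ℝ)) *
          (genLaguerre n (T - n)).comp (Polynomial.C α⁻¹ * Polynomial.X) := by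
  have hαne : α ≠ 0 := ne_of_gt hα
  have hfun : (fun p : Polynomial ℝ => p - Polynomial.C α * Polynomial.derivative p)
      = ⇑((1 : Module.End ℝ (Polynomial ℝ))
          - α • (Polynomial.derivative : Polynomial ℝ →ₗ[ℝ] Polynomial ℝ)) := by
    funext p
    simp [Polynomial.smul_eq_C_mul]
  rw [hfun, ← Module.End.pow_apply]
  have hA : ((1 : Module.End ℝ (Polynomial ℝ))
      - α • (Polynomial.derivative : Polynomial ℝ →ₗ[ℝ] Polynomial ℝ)) ^ T
      = ∑ m ∈ Finset.range (T + 1),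
        (-(α • (Polynomial.derivative : Polynomial ℝ →ₗ[ℝ] Polynomial ℝ))) ^ m * 1 ^ (T - m)
          * (T.choose m : Module.End ℝ (Polynomial ℝ)) := by
    rw [sub_eq_neg_add]
    exact (Commute.one_right _).add_pow T
  rw [hA, LinearMap.sum_apply,
    Finset.sum_congr rfl (fun m _ => aux_term α T n m)]
  -- truncate the sum to range (n+1)
  rw [← Finset.sum_subset (Finset.range_subset_range.2 (by omega : n + 1 ≤ T + 1))
      (fun m _ hm => by
        have hnm : n < m := by simpa using hm
        rw [Nat.descFactorial_of_lt hnm]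
        simp)]
  -- expand the right-hand side
  have hR : C ((-α) ^ n * (n.factorial : ℝ)) * (genLaguerre n (T - n)).comp (C α⁻¹ * X)
      = ∑ j ∈ Finset.range (n + 1),
          C ((-α) ^ n * (n.factorial : ℝ)
              * ((-1 : ℝ) ^ j * (T.choose (n - j) : ℝ) / (j.factorial : ℝ)) * (α⁻¹) ^ j)
            * X ^ j := by
    rw [genLaguerre, show n + (T - n) = T by omega, Polynomial.sum_comp, Finset.mul_sum]
    refine Finset.sum_congr rfl fun j hj => ?_
    simp only [Polynomial.mul_comp, Polynomial.C_comp, Polynomial.pow_comp, Polynomial.X_comp,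
      mul_pow, ← Polynomial.C_pow, map_mul, map_div₀]
    ring
  rw [hR]
  conv_rhs => rw [← Finset.sum_range_reflect]
  refine Finset.sum_congr rfl fun m hm => ?_
  have hm' : m ≤ n := by
    have := Finset.mem_range.mp hm; omega
  obtain ⟨d, rfl⟩ : ∃ d, n = m + d := ⟨n - m, by omega⟩
  have h1 : m + d + 1 - 1 - m = d := by omega
  have h2 : m + d - m = d := by omega
  have h3 : m + d - d = m := by omega
  rw [h1, h3, h2]
  refine congrArg (fun c => Polynomial.C c * X ^ d) ?_
  have hfact : ((d.factorial : ℝ)) * ((m + d).descFactorial m : ℝ) = ((m + d).factorial : ℝ) := by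
    exact_mod_cast congrArg (Nat.cast : ℕ → ℝ)
      (by simpa using Nat.factorial_mul_descFactorial (Nat.le_add_right m d))
  have hd : (d.factorial : ℝ) ≠ 0 := by exact_mod_cast d.factorial_ne_zero
  have hcancel : (-α) ^ d * (-1 : ℝ) ^ d * (α⁻¹) ^ d = 1 := by
    rw [← mul_pow, ← mul_pow]
    simp [mul_comm, mul_inv_cancel₀ hαne]
  rw [show ((m + d).factorial : ℝ) = (d.factorial : ℝ) * ((m + d).descFactorial m : ℝ)
      from hfact.symm, pow_add]
  have hneg : ((-α : ℝ)) ^ d = (-1 : ℝ) ^ d * α ^ d := by rw [neg_pow]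
  have hsq : ((-1 : ℝ) ^ d) * ((-1 : ℝ) ^ d) = 1 := by
    rw [← pow_add]; exact Even.neg_one_pow ⟨d, rfl⟩
  rw [hneg, inv_pow]
  field_simp
  linear_combination
    (-((T.choose m : ℝ) * (-α) ^ m)) * hsq
end

section
/- Let G be a weighted graph with maximum weighted degree 1, minimum weighted degree at least 1 - 4/√d, all edge weights at most 4/√d, minimum combinatorial degree at least d/4, and girth greater than 2k+1. Then there exists a vertex r such that f_rᵀ W f_r ≥ 2k/√d - C·k²/d^{3/4} for an absolute constant C, where W is the weighted adjacency matrix and f_r(v) is the square root of the product of edge weights along the unique shortest path from r to v if dist(r,v) ≤ k, and 0 otherwise. -/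
open SimpleGraph Finset

section AuxGraph

variable {V : Type*} [DecidableEq V] {G : SimpleGraph V}

/-- Two distinct paths between the same endpoints yield a cycle of length at most the
sum of their lengths. -/
lemma aux_cycle_of_two_paths : ∀ (N : ℕ) {a b : V} (p q : G.Walk a b),
    p.length + q.length ≤ N → p.IsPath → q.IsPath → p ≠ q →
    ∃ (x : V) (c : G.Walk x x), c.IsCycle ∧ c.length ≤ p.length + q.length := by
  intro N
  induction N with
  | zero =>
    intro a b p q hlen hp hq hne
    have hp0 : p.length = 0 := by omega
    obtain rfl := SimpleGraph.Walk.eq_of_length_eq_zero hp0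
    rw [SimpleGraph.Walk.isPath_iff_eq_nil] at hp hq
    exact absurd (hp.trans hq.symm) hne
  | succ N ih =>
    intro a b p q hlen hp hq hne
    cases p with
    | nil =>
      rw [SimpleGraph.Walk.isPath_iff_eq_nil] at hq
      exact absurd hq.symm hne
    | @cons _ x _ h p' =>
      cases q with
      | nil =>
        rw [SimpleGraph.Walk.isPath_iff_eq_nil] at hp
        exact absurd hp hne
      | @cons _ y _ h₂ q' =>
        rw [SimpleGraph.Walk.cons_isPath_iff] at hp hq
        by_cases hxy : x = y
        · subst hxy
          have hne' : p' ≠ q' := by rintro rfl; exact hne rfl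
          obtain ⟨z, c, hc, hcl⟩ := ih p' q' (by simp at hlen ⊢; omega) hp.1 hq.1 hne'
          exact ⟨z, c, hc, by simp; omega⟩
        · set w : G.Walk x y := p'.append q'.reverse with hw
          set t := w.bypass with ht
          have htp : t.IsPath := SimpleGraph.Walk.bypass_isPath w
          have hta : a ∉ t.support := by
            intro hmem
            have := SimpleGraph.Walk.support_bypass_subset w hmem
            rw [hw, SimpleGraph.Walk.mem_support_append_iff] at this
            rcases this with h1 | h1
            · exact hp.2 h1
            · rw [SimpleGraph.Walk.support_reverse, List.mem_reverse] at h1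
              exact hq.2 h1
          set P : G.Walk x a := (SimpleGraph.Walk.cons h₂ t.reverse).reverse with hP
          have hPp : P.IsPath := by
            apply SimpleGraph.Walk.IsPath.reverse
            rw [SimpleGraph.Walk.cons_isPath_iff]
            exact ⟨htp.reverse, by rwa [SimpleGraph.Walk.support_reverse, List.mem_reverse]⟩
          have hedge : s(a, x) ∉ P.edges := by
            rw [hP, SimpleGraph.Walk.edges_reverse, List.mem_reverse]
            simp only [SimpleGraph.Walk.edges_cons, List.mem_cons]
            rintro (habs | habs)
            · rw [Sym2.eq_iff] at habs
              rcases habs with ⟨-, rfl⟩ | ⟨rfl, rfl⟩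
              · exact hxy rfl
              · exact G.loopless.irrefl _ h₂
            · have := SimpleGraph.Walk.fst_mem_support_of_mem_edges _ habs
              rw [SimpleGraph.Walk.support_reverse, List.mem_reverse] at this
              exact hta this
          refine ⟨a, SimpleGraph.Walk.cons h P, ?_, ?_⟩
          · rw [SimpleGraph.Walk.cons_isCycle_iff]
            exact ⟨hPp, hedge⟩
          · have hPl : P.length = t.length + 1 := by
              rw [hP, SimpleGraph.Walk.length_reverse, SimpleGraph.Walk.length_cons,
                SimpleGraph.Walk.length_reverse]
            have htl : t.length ≤ p'.length + q'.length := by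
              have := SimpleGraph.Walk.length_bypass_le w
              rwa [hw, SimpleGraph.Walk.length_append, SimpleGraph.Walk.length_reverse] at this
            simp only [SimpleGraph.Walk.length_cons]
            omega

/-- With all cycles longer than `L`, paths with length-sum at most `L` are unique. -/
lemma aux_path_unique {L : ℕ} (hcyc : ∀ (x : V) (c : G.Walk x x), c.IsCycle → L < c.length)
    {a b : V} (p q : G.Walk a b) (hp : p.IsPath) (hq : q.IsPath)
    (hlen : p.length + q.length ≤ L) : p = q := by
  by_contra hne
  obtain ⟨x, c, hc, hcl⟩ :=
    aux_cycle_of_two_paths (p.length + q.length) p q le_rfl hp hq hne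
  exact absurd (hcyc x c hc) (by omega)

omit [DecidableEq V] in
lemma aux_mem_support_le {r u x : V} (p : G.Walk r u) (hx : x ∈ p.support) :
    G.dist r x ≤ p.length ∧ (G.dist r x = p.length → x = u) := by
  classical
  have h1 : G.dist r x ≤ (p.takeUntil x hx).length := SimpleGraph.dist_le _
  have h2 := SimpleGraph.Walk.length_takeUntil_le p hx
  refine ⟨h1.trans h2, fun he => ?_⟩
  have hspec := SimpleGraph.Walk.take_spec p hx
  have hlen := congr_arg SimpleGraph.Walk.length hspec
  rw [SimpleGraph.Walk.length_append] at hlen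
  have : (p.dropUntil x hx).length = 0 := by omega
  exact SimpleGraph.Walk.eq_of_length_eq_zero this

omit [DecidableEq V] in
lemma aux_dist_succ_of_adj {r u v : V} (h : G.Adj u v) (hr : G.Reachable r u) :
    G.dist r v ≤ G.dist r u + 1 := by
  obtain ⟨p, hp⟩ := hr.exists_walk_length_eq_dist
  have := SimpleGraph.dist_le (p.concat h)
  rwa [SimpleGraph.Walk.length_concat, hp] at this

/-- No adjacent pair at equal distance within the "tree radius". -/
lemma aux_adj_dist_ne {k : ℕ}
    (hcyc : ∀ (x : V) (c : G.Walk x x), c.IsCycle → 2 * k + 1 < c.length)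
    {r u v : V} (h : G.Adj u v) (hru : G.Reachable r u)
    (huv : G.dist r u = G.dist r v) (hk : G.dist r u ≤ k) : False := by
  obtain ⟨p, hp⟩ := hru.exists_walk_length_eq_dist
  have hrv : G.Reachable r v := hru.trans h.reachable
  obtain ⟨q, hq⟩ := hrv.exists_walk_length_eq_dist
  have hpP : p.IsPath := p.isPath_of_length_eq_dist hp
  have hqP : q.IsPath := q.isPath_of_length_eq_dist hq
  have hvns : v ∉ p.support := by
    intro hv
    have h2 := aux_mem_support_le p hv
    have : v = u := h2.2 (by omega)
    exact G.loopless.irrefl u (this ▸ h)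
  have hcP : (p.concat h).IsPath := by
    rw [← SimpleGraph.Walk.isPath_reverse_iff, SimpleGraph.Walk.reverse_concat,
      SimpleGraph.Walk.cons_isPath_iff]
    exact ⟨hpP.reverse, by rwa [SimpleGraph.Walk.support_reverse, List.mem_reverse]⟩
  have := aux_path_unique hcyc (p.concat h) q hcP hqP
    (by rw [SimpleGraph.Walk.length_concat, hp, hq, ← huv]; omega)
  have hlen := congr_arg SimpleGraph.Walk.length this
  rw [SimpleGraph.Walk.length_concat, hp, hq] at hlen
  omega

/-- Uniqueness of the parent. -/
lemma aux_parent_unique {k m : ℕ}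
    (hcyc : ∀ (x : V) (c : G.Walk x x), c.IsCycle → 2 * k + 1 < c.length)
    {r u q q' : V} (h : G.Adj q u) (h' : G.Adj q' u)
    (hq : G.dist r q = m) (hq' : G.dist r q' = m) (hu : G.dist r u = m + 1)
    (hk : m + 1 ≤ k) (hru : G.Reachable r u) : q = q' := by
  have hrq : G.Reachable r q := hru.trans h.symm.reachable
  have hrq' : G.Reachable r q' := hru.trans h'.symm.reachable
  obtain ⟨P, hP⟩ := hrq.exists_walk_length_eq_dist
  obtain ⟨P', hP'⟩ := hrq'.exists_walk_length_eq_dist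
  have hc : (P.concat h).length = G.dist r u := by
    rw [SimpleGraph.Walk.length_concat, hP, hq, hu]
  have hc' : (P'.concat h').length = G.dist r u := by
    rw [SimpleGraph.Walk.length_concat, hP', hq', hu]
  have hcP : (P.concat h).IsPath := (P.concat h).isPath_of_length_eq_dist hc
  have hcP' : (P'.concat h').IsPath := (P'.concat h').isPath_of_length_eq_dist hc'
  have heq : P.concat h = P'.concat h' := by
    apply aux_path_unique hcyc _ _ hcP hcP'
    rw [hc, hc', hu]; omega
  have := congr_arg SimpleGraph.Walk.reverse heq
  rw [SimpleGraph.Walk.reverse_concat, SimpleGraph.Walk.reverse_concat] at this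
  injection this

omit [DecidableEq V] in
lemma aux_parent_exists {r v : V} (hrv : G.Reachable r v) (h1 : 1 ≤ G.dist r v) :
    ∃ u, G.Adj u v ∧ G.dist r u + 1 = G.dist r v := by
  obtain ⟨p, hp⟩ := hrv.exists_walk_length_eq_dist
  cases hrev : p.reverse with
  | nil =>
    have := congr_arg SimpleGraph.Walk.length hrev
    rw [SimpleGraph.Walk.length_reverse] at this
    simp at this
    rw [SimpleGraph.dist_self] at h1
    omega
  | @cons _ y _ h q =>
    have hlen : p.length = q.length + 1 := by
      have := congr_arg SimpleGraph.Walk.length hrev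
      rw [SimpleGraph.Walk.length_reverse] at this
      simpa using this
    have hry : G.Reachable r y := (q.reverse).reachable
    have hd1 : G.dist r y ≤ q.length := by
      have := SimpleGraph.dist_le q.reverse
      rwa [SimpleGraph.Walk.length_reverse] at this
    have hd2 : G.dist r v ≤ G.dist r y + 1 := aux_dist_succ_of_adj h.symm hry
    exact ⟨y, h.symm, by omega⟩

omit [DecidableEq V] in
lemma aux_dist_one_of_adj {u v : V} (h : G.Adj u v) : G.dist u v = 1 := by
  have h1 : G.dist u v ≤ 1 := by
    have := SimpleGraph.dist_le h.toWalk
    simpa using this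
  have h0 : G.dist u v ≠ 0 := by
    intro h0
    rcases SimpleGraph.dist_eq_zero_iff_eq_or_not_reachable.mp h0 with rfl | hnr
    · exact G.loopless.irrefl _ h
    · exact hnr h.reachable
  omega

end AuxGraph

lemma aux_f_nonneg {n k : ℕ} {G : SimpleGraph (Fin n)} {W : Matrix (Fin n) (Fin n) ℝ}
    {f : Fin n → Fin n → ℝ}
    (hfr : ∀ r, f r r = 1) (hfar : ∀ r v, k < G.dist r v → f r v = 0)
    (hfunreach : ∀ r v, ¬ G.Reachable r v → f r v = 0)
    (hfrec : ∀ r v u, 1 ≤ G.dist r v → G.dist r v ≤ k → G.Adj u v →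
      G.dist r u + 1 = G.dist r v → f r v = Real.sqrt (W u v) * f r u) :
    ∀ r v, 0 ≤ f r v := by
  intro r v
  by_cases hreach : G.Reachable r v
  case neg => rw [hfunreach r v hreach]
  suffices H : ∀ m v, G.Reachable r v → G.dist r v = m → 0 ≤ f r v from H _ v hreach rfl
  intro m
  induction m using Nat.strong_induction_on with
  | _ m ih =>
    intro v hrv hm
    rcases Nat.eq_zero_or_pos m with rfl | hpos
    · obtain rfl : r = v := hrv.dist_eq_zero_iff.mp hm
      rw [hfr]; norm_num
    · by_cases hk : k < m
      · rw [hfar r v (by omega)]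
      · push_neg at hk
        obtain ⟨u, hadj, hdu⟩ := aux_parent_exists hrv (by omega)
        have hrec := hfrec r v u (by omega) (by omega) hadj hdu
        have hu : 0 ≤ f r u :=
          ih (G.dist r u) (by omega) u (hrv.trans hadj.symm.reachable) rfl
        rw [hrec]
        exact mul_nonneg (Real.sqrt_nonneg _) hu

set_option maxHeartbeats 2000000 in
open Matrix in
/-- In a weighted graph with n vertices, dn/2 edges, max weighted degree 1,
min weighted degree ≥ 1 - 4/√d, edge weights ≤ 4/√d, min combinatorial degree ≥ d/4 and
girth > 2k+1 (d ≥ 25, k ≤ d^{1/8}), there is a vertex r with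
f_rᵀ W f_r ≥ 2k/√d - C·k²/d^{3/4}, where f_r(v) is the square root of the product of the
edge weights on the unique shortest path from r to v when dist(r,v) ≤ k, and 0 otherwise. -/
theorem exists_good_root :
    ∃ C : ℝ, 0 < C ∧
      ∀ (n : ℕ) (d : ℝ) (k : ℕ) (_hd : 25 ≤ d) (_hk1 : 1 ≤ k)
        (_hk : (k : ℝ) ≤ d ^ ((1 : ℝ) / 8))
        (W : Matrix (Fin n) (Fin n) ℝ)
        (_hsymm : W.IsSymm)
        (_hnonneg : ∀ u v, 0 ≤ W u v)
        (_hdiag : ∀ u, W u u = 0)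
        (G : SimpleGraph (Fin n))
        (_hadj : ∀ u v, G.Adj u v ↔ u ≠ v ∧ W u v ≠ 0)
        (_hedges : (G.edgeSet.ncard : ℝ) = d * n / 2)
        (_hgirth : (2 * k + 1 : ℕ∞) < G.girth)
        (_hmindeg : ∀ v, (({u | G.Adj v u}.ncard : ℝ)) ≥ d / 4)
        (_hwle : ∀ u v, W u v ≤ 4 / Real.sqrt d)
        (_hmaxdeg : ∀ u, ∑ v, W u v ≤ 1)
        (_hmindegw : ∀ u, 1 - 4 / Real.sqrt d ≤ ∑ v, W u v)
        (f : Fin n → Fin n → ℝ)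
        (_hfr : ∀ r, f r r = 1)
        (_hfar : ∀ r v, k < G.dist r v → f r v = 0)
        (_hfunreach : ∀ r v, ¬ G.Reachable r v → f r v = 0)
        (_hfrec : ∀ r v u, 1 ≤ G.dist r v → G.dist r v ≤ k → G.Adj u v →
          G.dist r u + 1 = G.dist r v → f r v = Real.sqrt (W u v) * f r u),
        ∃ r, f r ⬝ᵥ (W *ᵥ f r) ≥ 2 * k / Real.sqrt d - C * k ^ 2 / d ^ ((3 : ℝ) / 4) := by
  classical
  refine ⟨128, by norm_num, ?_⟩
  intro n d k hd hk1 hk W hsymm hnonneg hdiag G hadj hedges hgirth hmindeg hwle hmaxdeg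
    hmindegw f hfr hfar hfunreach hfrec
  -- basic facts about d
  have hd0 : (0:ℝ) < d := by linarith
  have hs0 : (0:ℝ) < Real.sqrt d := Real.sqrt_pos.mpr hd0
  have hd1 : (1:ℝ) ≤ d := by linarith
  set s : ℝ := Real.sqrt d with hs
  -- cycle length bound
  have hac : ¬ G.IsAcyclic := by
    intro h
    rw [h.girth_eq_zero] at hgirth
    exact absurd hgirth (by simp)
  have hcyc : ∀ (x : Fin n) (c : G.Walk x x), c.IsCycle → 2 * k + 1 < c.length := by
    intro x c hc
    have hne : G.egirth ≠ ⊤ := fun h => hac (egirth_eq_top.mp h)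
    have hco : G.egirth = (G.girth : ℕ∞) := (ENat.coe_toNat hne).symm
    have h1 : (2 * k + 1 : ℕ∞) < G.egirth := hco ▸ hgirth
    have h2 : G.egirth ≤ (c.length : ℕ∞) := by
      apply le_egirth.mp le_rfl x c hc
    have : (2 * k + 1 : ℕ∞) < (c.length : ℕ∞) := lt_of_lt_of_le h1 h2
    exact_mod_cast this
  -- nonemptiness
  obtain ⟨a0, -, -, -⟩ := exists_girth_eq_length.mpr hac
  have hne : (Finset.univ : Finset (Fin n)).Nonempty := ⟨a0, Finset.mem_univ _⟩
  have hn1 : 1 ≤ (n:ℝ) := by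
    have : 0 < n := Fin.pos_iff_nonempty.mpr ⟨a0⟩ -- maybe Fin.pos
    exact_mod_cast this
  -- f nonneg
  have hf0 : ∀ r v, 0 ≤ f r v := aux_f_nonneg hfr hfar hfunreach hfrec
  -- Q as a sum over pairs
  have hQ : ∀ r, f r ⬝ᵥ (W *ᵥ f r)
      = ∑ p ∈ Finset.univ ×ˢ Finset.univ, f r p.1 * (W p.1 p.2 * f r p.2) := by
    intro r
    rw [Finset.sum_product]
    simp only [dotProduct, Matrix.mulVec, Finset.mul_sum]
  have hQ0 : ∀ r, 0 ≤ f r ⬝ᵥ (W *ᵥ f r) := by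
    intro r
    rw [hQ r]
    apply Finset.sum_nonneg
    intro p _
    exact mul_nonneg (hf0 _ _) (mul_nonneg (hnonneg _ _) (hf0 _ _))
  have hd34 : (0:ℝ) < d ^ ((3:ℝ)/4) := Real.rpow_pos_of_pos hd0 _
  have hkR : (1:ℝ) ≤ (k:ℝ) := by exact_mod_cast hk1
  rcases lt_or_ge d 64 with h64 | h64
  · -- small d : the right-hand side is nonpositive
    refine ⟨a0, ?_⟩
    have hq14 : d ^ ((1:ℝ)/4) ≤ 64 := by
      calc d ^ ((1:ℝ)/4) ≤ d ^ (1:ℝ) :=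
            Real.rpow_le_rpow_of_exponent_le hd1 (by norm_num)
      _ = d := Real.rpow_one d
      _ ≤ 64 := le_of_lt h64
    have hsplit : d ^ ((3:ℝ)/4) = d ^ ((1:ℝ)/4) * s := by
      rw [hs, Real.sqrt_eq_rpow, ← Real.rpow_add hd0]
      norm_num
    have hrhs : 2 * (k:ℝ) / s - 128 * k ^ 2 / d ^ ((3:ℝ)/4) ≤ 0 := by
      rw [sub_nonpos, div_le_div_iff₀ hs0 hd34]
      calc 2 * (k:ℝ) * d ^ ((3:ℝ)/4) = 2 * (k:ℝ) * d ^ ((1:ℝ)/4) * s := by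
            rw [hsplit]; ring
      _ ≤ 2 * (k:ℝ) * 64 * s := by
            have h1 : (0:ℝ) ≤ 2 * (k:ℝ) := by positivity
            have := mul_le_mul_of_nonneg_left hq14 h1
            exact mul_le_mul_of_nonneg_right this (le_of_lt hs0)
      _ = 128 * ((k:ℝ) * 1) * s := by ring
      _ ≤ 128 * ((k:ℝ) * (k:ℝ)) * s := by
            have : (k:ℝ) * 1 ≤ (k:ℝ) * (k:ℝ) :=
              mul_le_mul_of_nonneg_left hkR (by positivity)
            exact mul_le_mul_of_nonneg_right
              (mul_le_mul_of_nonneg_left this (by norm_num)) (le_of_lt hs0)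
      _ = 128 * (k:ℝ) ^ 2 * s := by ring
    exact le_trans hrhs (hQ0 a0)
  · -- main case : d ≥ 64
    have hs8 : (8:ℝ) ≤ s := by
      rw [hs, show (8:ℝ) = Real.sqrt 64 by
        rw [show (64:ℝ) = 8^2 by norm_num, Real.sqrt_sq (by norm_num)]]
      exact Real.sqrt_le_sqrt h64
    set β : ℝ := 1 - 8 / s with hβ
    have hβ0 : 0 ≤ β := by
      rw [hβ, sub_nonneg, div_le_one hs0]; exact hs8
    have hβ1 : β ≤ 1 := by
      rw [hβ]; have : 0 ≤ 8 / s := by positivity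
      linarith
    have h45 : (0:ℝ) ≤ 1 - 4 / s := by
      rw [sub_nonneg, div_le_one hs0]; linarith
    have hAdj_of_W : ∀ u q, W u q ≠ 0 → G.Adj u q := by
      intro u q hWq
      refine (hadj u q).mpr ⟨fun h => hWq ?_, hWq⟩
      rw [h]; exact hdiag q
    set Φ : ℕ → Fin n → Fin n → ℝ := fun ℓ u v =>
      ∑ r ∈ Finset.univ.filter (fun r => G.dist r u = ℓ ∧ G.dist r v = ℓ + 1),
        (f r u)^2 with hΦ
    have stepA : ∀ ℓ, ℓ < k → ∀ u v, G.Adj u v → β ^ ℓ ≤ Φ ℓ u v := by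
      intro ℓ
      induction ℓ with
      | zero =>
        intro _ u v huv
        have hmem : u ∈ Finset.univ.filter
            (fun r => G.dist r u = 0 ∧ G.dist r v = 0 + 1) := by
          refine Finset.mem_filter.mpr ⟨Finset.mem_univ _, ?_, ?_⟩
          · exact SimpleGraph.dist_self
          · rw [aux_dist_one_of_adj huv]
        calc β ^ 0 = (f u u)^2 := by rw [hfr u]; norm_num
        _ ≤ Φ 0 u v := Finset.single_le_sum (fun r _ => sq_nonneg (f r u)) hmem
      | succ ℓ ih =>
        intro hlk u v huv
        have hlk' : ℓ < k := by omega
        -- sum over neighbours of u other than v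
        have hsum1 : β ≤ ∑ q ∈ Finset.univ.erase v, W u q := by
          rw [Finset.sum_erase_eq_sub (Finset.mem_univ v)]
          have h1 := hmindegw u
          have h2 := hwle u v
          rw [hβ, hs]
          have h8 : (8:ℝ)/Real.sqrt d = 4/Real.sqrt d + 4/Real.sqrt d := by ring
          rw [h8]
          linarith
        have hsum2 : ∑ q ∈ Finset.univ.erase v, W u q * β ^ ℓ
            ≤ ∑ q ∈ Finset.univ.erase v, W u q * Φ ℓ q u := by
          apply Finset.sum_le_sum
          intro q hq
          by_cases hWq : W u q = 0
          · simp [hWq]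
          · exact mul_le_mul_of_nonneg_left
              (ih hlk' q u (hAdj_of_W u q hWq).symm) (hnonneg u q)
        set N' : Finset (Fin n) := (Finset.univ.erase v).filter (fun q => G.Adj u q)
          with hN'
        have hsum3 : ∑ q ∈ N', W u q * Φ ℓ q u
            = ∑ q ∈ Finset.univ.erase v, W u q * Φ ℓ q u := by
          apply Finset.sum_filter_of_ne
          intro q _ hne0
          apply hAdj_of_W
          intro hWq
          rw [hWq, zero_mul] at hne0
          exact hne0 rfl
        -- the fibers
        set R : Fin n → Finset (Fin n) := fun q =>
          Finset.univ.filter (fun r => G.dist r q = ℓ ∧ G.dist r u = ℓ + 1) with hR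
        have hkey : ∀ q ∈ N', W u q * Φ ℓ q u = ∑ r ∈ R q, (f r u)^2 := by
          intro q hq
          rw [hN', Finset.mem_filter, Finset.mem_erase] at hq
          obtain ⟨⟨hqv, -⟩, hadjq⟩ := hq
          rw [hΦ, hR, Finset.mul_sum]
          apply Finset.sum_congr rfl
          intro r hr
          rw [Finset.mem_filter] at hr
          obtain ⟨-, hrq, hru⟩ := hr
          have hrec := hfrec r u q (by omega) (by omega) hadjq.symm (by omega)
          rw [hrec, mul_pow, Real.sq_sqrt (hnonneg q u), hsymm.apply u q]
        have hdisjR : (↑N' : Set (Fin n)).PairwiseDisjoint R := by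
          intro q1 h1 q2 h2 hne12
          simp only [hN', Finset.coe_filter, Set.mem_setOf_eq, Finset.mem_erase,
            Finset.mem_univ, and_true, true_and] at h1 h2
          rw [Function.onFun, Finset.disjoint_left]
          intro r hr1 hr2
          rw [hR, Finset.mem_filter] at hr1 hr2
          obtain ⟨-, hrq1, hru⟩ := hr1
          obtain ⟨-, hrq2, -⟩ := hr2
          have hreach : G.Reachable r u := Reachable.of_dist_ne_zero (by omega)
          exact hne12 (aux_parent_unique hcyc h1.2.symm h2.2.symm hrq1 hrq2 hru
            (by omega) hreach)
        have hsubR : N'.biUnion R ⊆ Finset.univ.filter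
            (fun r => G.dist r u = ℓ + 1 ∧ G.dist r v = (ℓ+1) + 1) := by
          intro r hr
          rw [Finset.mem_biUnion] at hr
          obtain ⟨q, hq, hrq⟩ := hr
          rw [hN', Finset.mem_filter, Finset.mem_erase] at hq
          obtain ⟨⟨hqv, -⟩, hadjq⟩ := hq
          rw [hR, Finset.mem_filter] at hrq
          obtain ⟨-, hrq1, hru⟩ := hrq
          have hreach : G.Reachable r u := Reachable.of_dist_ne_zero (by omega)
          have hreachv : G.Reachable r v := hreach.trans huv.reachable
          have hub : G.dist r v ≤ G.dist r u + 1 := aux_dist_succ_of_adj huv hreach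
          have hlb : G.dist r u ≤ G.dist r v + 1 := aux_dist_succ_of_adj huv.symm hreachv
          have hne1 : G.dist r v ≠ ℓ + 1 := by
            intro habs
            exact aux_adj_dist_ne hcyc huv hreach (by omega) (by omega)
          have hne2 : G.dist r v ≠ ℓ := by
            intro habs
            exact hqv (aux_parent_unique hcyc hadjq.symm huv.symm hrq1 habs hru
              (by omega) hreach)
          refine Finset.mem_filter.mpr ⟨Finset.mem_univ _, by omega, by omega⟩
        calc β ^ (ℓ + 1) = β * β ^ ℓ := by rw [pow_succ]; ring
        _ ≤ (∑ q ∈ Finset.univ.erase v, W u q) * β ^ ℓ :=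
            mul_le_mul_of_nonneg_right hsum1 (pow_nonneg hβ0 ℓ)
        _ = ∑ q ∈ Finset.univ.erase v, W u q * β ^ ℓ := by rw [Finset.sum_mul]
        _ ≤ ∑ q ∈ Finset.univ.erase v, W u q * Φ ℓ q u := hsum2
        _ = ∑ q ∈ N', W u q * Φ ℓ q u := hsum3.symm
        _ = ∑ q ∈ N', ∑ r ∈ R q, (f r u)^2 := Finset.sum_congr rfl hkey
        _ = ∑ r ∈ N'.biUnion R, (f r u)^2 := (Finset.sum_biUnion hdisjR).symm
        _ ≤ Φ (ℓ+1) u v := by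
            rw [hΦ]
            exact Finset.sum_le_sum_of_subset_of_nonneg hsubR
              (fun r _ _ => sq_nonneg (f r u))
    -- Part B
    set T : Fin n × Fin n → ℝ := fun p => W p.1 p.2 * Real.sqrt (W p.1 p.2) with hT
    have hT0 : ∀ p, 0 ≤ T p := fun p => mul_nonneg (hnonneg _ _) (Real.sqrt_nonneg _)
    set E : Finset (Fin n × Fin n) :=
      (Finset.univ ×ˢ Finset.univ).filter (fun p => G.Adj p.1 p.2) with hE
    set D : Fin n → Finset (Fin n × Fin n) := fun r =>
      (Finset.univ ×ˢ Finset.univ).filter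
        (fun p => G.Adj p.1 p.2 ∧ G.dist r p.1 + 1 = G.dist r p.2 ∧ G.dist r p.2 ≤ k)
      with hD
    -- B1 : per-root lower bound
    have hB1 : ∀ r, 2 * ∑ p ∈ D r, T p * (f r p.1)^2 ≤ f r ⬝ᵥ (W *ᵥ f r) := by
      intro r
      have hterm0 : ∀ p ∈ Finset.univ ×ˢ Finset.univ,
          (0:ℝ) ≤ f r p.1 * (W p.1 p.2 * f r p.2) :=
        fun p _ => mul_nonneg (hf0 _ _) (mul_nonneg (hnonneg _ _) (hf0 _ _))
      have hDsub : D r ⊆ Finset.univ ×ˢ Finset.univ := Finset.filter_subset _ _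
      have hDsub' : (D r).image Prod.swap ⊆ Finset.univ ×ˢ Finset.univ := by
        intro p _; simp [Finset.mem_product]
      have hdisj : Disjoint (D r) ((D r).image Prod.swap) := by
        rw [Finset.disjoint_left]
        intro p hp hp'
        rw [hD, Finset.mem_filter] at hp
        rw [Finset.mem_image] at hp'
        obtain ⟨q, hq, hqp⟩ := hp'
        rw [hD, Finset.mem_filter] at hq
        have h1 := hp.2.2.1
        have h2 := hq.2.2.1
        rw [← hqp] at h1
        simp only [Prod.fst_swap, Prod.snd_swap] at h1
        omega
      have hstep : ∑ p ∈ D r ∪ (D r).image Prod.swap, f r p.1 * (W p.1 p.2 * f r p.2)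
          ≤ ∑ p ∈ Finset.univ ×ˢ Finset.univ, f r p.1 * (W p.1 p.2 * f r p.2) :=
        Finset.sum_le_sum_of_subset_of_nonneg (Finset.union_subset hDsub hDsub')
          (fun p hp _ => hterm0 p hp)
      rw [Finset.sum_union hdisj] at hstep
      have him : ∑ p ∈ (D r).image Prod.swap, f r p.1 * (W p.1 p.2 * f r p.2)
          = ∑ p ∈ D r, f r p.1 * (W p.1 p.2 * f r p.2) := by
        rw [Finset.sum_image (fun a _ b _ h => Prod.swap_injective h)]
        apply Finset.sum_congr rfl
        intro p _
        simp only [Prod.fst_swap, Prod.snd_swap]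
        rw [hsymm.apply p.1 p.2]
        ring
      have hDval : ∀ p ∈ D r, f r p.1 * (W p.1 p.2 * f r p.2) = T p * (f r p.1)^2 := by
        intro p hp
        rw [hD, Finset.mem_filter] at hp
        obtain ⟨-, hadjp, heq, hle⟩ := hp
        have hrec := hfrec r p.2 p.1 (by omega) hle hadjp heq
        rw [hrec, hT]
        ring
      rw [hQ r]
      have : ∑ p ∈ D r, f r p.1 * (W p.1 p.2 * f r p.2) = ∑ p ∈ D r, T p * (f r p.1)^2 :=
        Finset.sum_congr rfl hDval
      linarith [hstep, him, this]
    -- B2 : regrouping the double sum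
    have hB2 : ∑ r, ∑ p ∈ D r, T p * (f r p.1)^2
        = ∑ ℓ ∈ Finset.range k, ∑ p ∈ E, T p * Φ ℓ p.1 p.2 := by
      have swap1 : ∑ r, ∑ p ∈ D r, T p * (f r p.1)^2
          = ∑ p ∈ Finset.univ ×ˢ Finset.univ, ∑ r ∈ Finset.univ.filter
              (fun r => G.Adj p.1 p.2 ∧ G.dist r p.1 + 1 = G.dist r p.2 ∧ G.dist r p.2 ≤ k),
              T p * (f r p.1)^2 := by
        rw [hD]
        simp_rw [Finset.sum_filter]
        rw [Finset.sum_comm]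
      rw [swap1]
      have hzero : ∀ p ∈ Finset.univ ×ˢ Finset.univ, p ∉ E →
          (∑ r ∈ Finset.univ.filter
            (fun r => G.Adj p.1 p.2 ∧ G.dist r p.1 + 1 = G.dist r p.2 ∧ G.dist r p.2 ≤ k),
            T p * (f r p.1)^2) = 0 := by
        intro p hp hpE
        rw [hE, Finset.mem_filter] at hpE
        have : ¬ G.Adj p.1 p.2 := fun h => hpE ⟨hp, h⟩
        rw [Finset.filter_false_of_mem (fun r _ => by simp [this])]
        exact Finset.sum_empty
      rw [← Finset.sum_subset (Finset.filter_subset _ _) hzero]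
      have hper : ∀ p ∈ E, (∑ r ∈ Finset.univ.filter
            (fun r => G.Adj p.1 p.2 ∧ G.dist r p.1 + 1 = G.dist r p.2 ∧ G.dist r p.2 ≤ k),
            T p * (f r p.1)^2)
          = ∑ ℓ ∈ Finset.range k, T p * Φ ℓ p.1 p.2 := by
        intro p hpE
        rw [hE, Finset.mem_filter] at hpE
        have hadjp := hpE.2
        have hpart : Finset.univ.filter
            (fun r => G.Adj p.1 p.2 ∧ G.dist r p.1 + 1 = G.dist r p.2 ∧ G.dist r p.2 ≤ k)
            = (Finset.range k).biUnion (fun ℓ => Finset.univ.filter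
                (fun r => G.dist r p.1 = ℓ ∧ G.dist r p.2 = ℓ + 1)) := by
          ext r
          simp only [Finset.mem_filter, Finset.mem_biUnion, Finset.mem_range,
            Finset.mem_univ, true_and]
          constructor
          · rintro ⟨-, h1, h2⟩
            exact ⟨G.dist r p.1, by omega, rfl, by omega⟩
          · rintro ⟨ℓ, hℓ, h1, h2⟩
            exact ⟨hadjp, by omega, by omega⟩
        have hdisjℓ : (↑(Finset.range k) : Set ℕ).PairwiseDisjoint
            (fun ℓ => Finset.univ.filter
              (fun r => G.dist r p.1 = ℓ ∧ G.dist r p.2 = ℓ + 1)) := by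
          intro ℓ1 h1x ℓ2 h2x hne12
          rw [Function.onFun, Finset.disjoint_left]
          intro r hr1 hr2
          rw [Finset.mem_filter] at hr1 hr2
          exact hne12 (hr1.2.1 ▸ hr2.2.1 ▸ rfl)
        rw [hpart, Finset.sum_biUnion hdisjℓ]
        apply Finset.sum_congr rfl
        intro ℓ _
        rw [hΦ, Finset.mul_sum]
      exact (Finset.sum_congr rfl hper).trans Finset.sum_comm
    -- B3 : apply the Φ bound
    set S3 : ℝ := ∑ p ∈ E, T p with hS3
    have hS30 : 0 ≤ S3 := Finset.sum_nonneg fun p _ => hT0 p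
    have hB3 : (k:ℝ) * β^(k-1) * S3 ≤ ∑ ℓ ∈ Finset.range k, ∑ p ∈ E, T p * Φ ℓ p.1 p.2 := by
      have hstep : ∀ ℓ ∈ Finset.range k, β^(k-1) * S3 ≤ ∑ p ∈ E, T p * Φ ℓ p.1 p.2 := by
        intro ℓ hℓ
        rw [Finset.mem_range] at hℓ
        rw [hS3, Finset.mul_sum]
        apply Finset.sum_le_sum
        intro p hp
        rw [hE, Finset.mem_filter] at hp
        have h1 : β^(k-1) ≤ β^ℓ := pow_le_pow_of_le_one hβ0 hβ1 (by omega)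
        have h2 : β^ℓ ≤ Φ ℓ p.1 p.2 := stepA ℓ hℓ p.1 p.2 hp.2
        calc β^(k-1) * T p = T p * β^(k-1) := by ring
        _ ≤ T p * Φ ℓ p.1 p.2 :=
            mul_le_mul_of_nonneg_left (h1.trans h2) (hT0 p)
      calc (k:ℝ) * β^(k-1) * S3 = ∑ _ℓ ∈ Finset.range k, β^(k-1) * S3 := by
            rw [Finset.sum_const, Finset.card_range, nsmul_eq_mul]; ring
      _ ≤ _ := Finset.sum_le_sum hstep
    -- global bound
    have hglobal : 2 * (k:ℝ) * β^(k-1) * S3 ≤ ∑ r, f r ⬝ᵥ (W *ᵥ f r) := by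
      have h1 : ∑ r, 2 * ∑ p ∈ D r, T p * (f r p.1)^2 ≤ ∑ r, f r ⬝ᵥ (W *ᵥ f r) :=
        Finset.sum_le_sum (fun r _ => hB1 r)
      have h2 : ∑ r, 2 * ∑ p ∈ D r, T p * (f r p.1)^2
          = 2 * ∑ ℓ ∈ Finset.range k, ∑ p ∈ E, T p * Φ ℓ p.1 p.2 := by
        rw [← Finset.mul_sum, hB2]
      rw [h2] at h1
      nlinarith [hB3]
    -- edge count
    have hcardE : (E.card : ℝ) = d * n := by
      have h1 : E.card = ∑ u : Fin n, G.degree u := by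
        rw [hE, Finset.card_filter, Finset.sum_product]
        refine Finset.sum_congr rfl fun u _ => ?_
        rw [← Finset.card_filter]
        congr 1
        rw [SimpleGraph.neighborFinset_eq_filter]
      have h2 := G.sum_degrees_eq_twice_card_edges
      have h3 : (G.edgeSet.ncard : ℝ) = (G.edgeFinset.card : ℝ) := by
        rw [← SimpleGraph.coe_edgeFinset, Set.ncard_coe_finset]
      have h4 : (E.card : ℝ) = 2 * (G.edgeFinset.card : ℝ) := by
        rw [h1]; exact_mod_cast congr_arg (Nat.cast (R := ℝ)) h2
      rw [h4, ← h3, hedges]; ring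
    -- S1 bounds
    set S1 : ℝ := ∑ p ∈ E, W p.1 p.2 with hS1
    have hS1eq : S1 = ∑ u : Fin n, ∑ v : Fin n, W u v := by
      rw [hS1, hE]
      rw [Finset.sum_filter_of_ne]
      · exact Finset.sum_product _ _ (fun p => W p.1 p.2)
      · intro p _ hW
        exact hAdj_of_W p.1 p.2 hW
    have hS1low : (n:ℝ) * (1 - 4/s) ≤ S1 := by
      rw [hS1eq]
      calc (n:ℝ) * (1 - 4/s) = ∑ _u : Fin n, (1 - 4/s) := by
            rw [Finset.sum_const, Finset.card_univ, Fintype.card_fin, nsmul_eq_mul]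
      _ ≤ ∑ u : Fin n, ∑ v : Fin n, W u v := Finset.sum_le_sum fun u _ => hmindegw u
    have hS1high : S1 ≤ (n:ℝ) := by
      rw [hS1eq]
      calc ∑ u : Fin n, ∑ v : Fin n, W u v ≤ ∑ _u : Fin n, (1:ℝ) :=
            Finset.sum_le_sum fun u _ => hmaxdeg u
      _ = (n:ℝ) := by
            rw [Finset.sum_const, Finset.card_univ, Fintype.card_fin, nsmul_eq_mul, mul_one]
    have hS10 : 0 ≤ S1 := le_trans (by positivity) hS1low
    -- Cauchy-Schwarz
    set Sh : ℝ := ∑ p ∈ E, Real.sqrt (W p.1 p.2) with hSh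
    have hSh0 : 0 ≤ Sh := Finset.sum_nonneg fun p _ => Real.sqrt_nonneg _
    have hcs1 : S1^2 ≤ S3 * Sh := by
      rw [hS1, hS3, hSh]
      apply Finset.sum_sq_le_sum_mul_sum_of_sq_eq_mul E
        (f := T) (g := fun p => Real.sqrt (W p.1 p.2))
      · exact fun p _ => hT0 p
      · exact fun p _ => Real.sqrt_nonneg _
      · intro p _
        rw [hT]
        rw [mul_assoc, Real.mul_self_sqrt (hnonneg _ _), sq]
    have hcs2 : Sh^2 ≤ S1 * E.card := by
      have := Finset.sum_sq_le_sum_mul_sum_of_sq_eq_mul E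
        (r := fun p => Real.sqrt (W p.1 p.2)) (f := fun p => W p.1 p.2)
        (g := fun _ => (1:ℝ))
        (fun p _ => hnonneg _ _) (fun p _ => zero_le_one)
        (fun p _ => by rw [Real.sq_sqrt (hnonneg _ _), mul_one])
      rw [Finset.sum_const, nsmul_eq_mul, mul_one] at this
      exact this
    -- bound on S3
    have hShle : Sh ≤ (n:ℝ) * s := by
      have h2 : ((n:ℝ) * s)^2 = (n:ℝ) * (d * n) := by
        rw [mul_pow, hs, Real.sq_sqrt hd0.le]; ring
      have h1 : Sh^2 ≤ ((n:ℝ) * s)^2 := by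
        rw [h2]
        calc Sh^2 ≤ S1 * E.card := hcs2
        _ = S1 * (d * n) := by rw [hcardE]
        _ ≤ (n:ℝ) * (d * n) := by
            apply mul_le_mul_of_nonneg_right hS1high
            positivity
      calc Sh = Real.sqrt (Sh^2) := (Real.sqrt_sq hSh0).symm
      _ ≤ Real.sqrt (((n:ℝ) * s)^2) := Real.sqrt_le_sqrt h1
      _ = (n:ℝ) * s := Real.sqrt_sq (by positivity)
    have hS3low : (n:ℝ) * (1 - 4/s)^2 / s ≤ S3 := by
      have hkey2 : ((n:ℝ) * (1 - 4/s))^2 ≤ S3 * ((n:ℝ) * s) := by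
        calc ((n:ℝ) * (1 - 4/s))^2 ≤ S1^2 := by
              apply pow_le_pow_left₀ (by positivity) hS1low
        _ ≤ S3 * Sh := hcs1
        _ ≤ S3 * ((n:ℝ) * s) := mul_le_mul_of_nonneg_left hShle hS30
      rw [div_le_iff₀ hs0]
      have hn0 : (0:ℝ) < n := by linarith
      have h5 : (n:ℝ) * ((n:ℝ) * (1 - 4/s)^2) ≤ (n:ℝ) * (S3 * s) := by
        calc (n:ℝ) * ((n:ℝ) * (1 - 4/s)^2) = ((n:ℝ) * (1 - 4/s))^2 := by ring
        _ ≤ S3 * ((n:ℝ) * s) := hkey2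
        _ = (n:ℝ) * (S3 * s) := by ring
      exact le_of_mul_le_mul_left h5 hn0
    -- averaging
    have havg : ∃ r, 2 * (k:ℝ) * β^(k-1) * (1 - 4/s)^2 / s ≤ f r ⬝ᵥ (W *ᵥ f r) := by
      have hsum : ∑ _r : Fin n, (2 * (k:ℝ) * β^(k-1) * (1 - 4/s)^2 / s)
          ≤ ∑ r, f r ⬝ᵥ (W *ᵥ f r) := by
        rw [Finset.sum_const, Finset.card_univ, Fintype.card_fin, nsmul_eq_mul]
        have hc0 : (0:ℝ) ≤ 2 * (k:ℝ) * β^(k-1) := by positivity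
        calc (n:ℝ) * (2 * (k:ℝ) * β^(k-1) * (1 - 4/s)^2 / s)
            = 2 * (k:ℝ) * β^(k-1) * ((n:ℝ) * (1 - 4/s)^2 / s) := by ring
        _ ≤ 2 * (k:ℝ) * β^(k-1) * S3 := mul_le_mul_of_nonneg_left hS3low hc0
        _ ≤ ∑ r, f r ⬝ᵥ (W *ᵥ f r) := hglobal
      obtain ⟨r, -, hr⟩ := Finset.exists_le_of_sum_le hne hsum
      exact ⟨r, hr⟩
    obtain ⟨r, hr⟩ := havg
    refine ⟨r, le_trans ?_ hr⟩
    -- final arithmetic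
    have hb1 : β ≤ (1 - 4/s)^2 := by
      have he : (1 - 4/s)^2 = 1 - 8/s + (4/s)^2 := by ring
      have h0 : (0:ℝ) ≤ (4/s)^2 := sq_nonneg _
      rw [he, hβ]
      linarith
    have hbk : β^k ≤ β^(k-1) * (1 - 4/s)^2 := by
      have h1 : β^k = β^(k-1) * β := by
        rw [← pow_succ, Nat.sub_add_cancel hk1]
      rw [h1]
      exact mul_le_mul_of_nonneg_left hb1 (pow_nonneg hβ0 _)
    have hbern : 1 - (k:ℝ) * (8/s) ≤ β^k := by
      have h := one_add_mul_le_pow (a := -(8/s)) (by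
        have h8 : 8/s ≤ 1 := (div_le_one hs0).mpr hs8
        linarith) k
      have h2 : (1 + -(8/s)) = β := by rw [hβ]; ring
      rw [h2] at h
      calc 1 - (k:ℝ) * (8/s) = 1 + (k:ℝ) * (-(8/s)) := by ring
      _ ≤ β^k := h
    have hfrac : 16 * (k:ℝ)^2 / d ≤ 128 * (k:ℝ)^2 / d ^ ((3:ℝ)/4) := by
      have hdle : d ^ ((3:ℝ)/4) ≤ d := by
        calc d ^ ((3:ℝ)/4) ≤ d ^ (1:ℝ) :=
              Real.rpow_le_rpow_of_exponent_le hd1 (by norm_num)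
        _ = d := Real.rpow_one d
      have h1 : 16 * (k:ℝ)^2 / d ≤ 16 * (k:ℝ)^2 / d ^ ((3:ℝ)/4) := by
        apply div_le_div_of_nonneg_left (by positivity) hd34 hdle
      have h2 : 16 * (k:ℝ)^2 / d ^ ((3:ℝ)/4) ≤ 128 * (k:ℝ)^2 / d ^ ((3:ℝ)/4) := by
        have hp0 : (0:ℝ) ≤ 112 * (k:ℝ)^2 / d ^ ((3:ℝ)/4) := by positivity
        have he : 128 * (k:ℝ)^2 / d ^ ((3:ℝ)/4)
            = 16 * (k:ℝ)^2 / d ^ ((3:ℝ)/4) + 112 * (k:ℝ)^2 / d ^ ((3:ℝ)/4) := by ring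
        linarith
      linarith
    have hss : s * s = d := by rw [hs]; exact Real.mul_self_sqrt hd0.le
    have hmain : 2 * (k:ℝ) / s - 16 * (k:ℝ)^2 / d
        ≤ 2 * (k:ℝ) * β^(k-1) * (1 - 4/s)^2 / s := by
      have hc0 : (0:ℝ) ≤ 2 * (k:ℝ) / s := by positivity
      have h1 : 2 * (k:ℝ) / s * (1 - (k:ℝ) * (8/s)) ≤ 2 * (k:ℝ) / s * (β^(k-1) * (1 - 4/s)^2) := by
        apply mul_le_mul_of_nonneg_left (le_trans hbern hbk) hc0
      calc 2 * (k:ℝ) / s - 16 * (k:ℝ)^2 / d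
          = 2 * (k:ℝ) / s * (1 - (k:ℝ) * (8/s)) := by
            field_simp
            rw [← hss]
            ring
      _ ≤ 2 * (k:ℝ) / s * (β^(k-1) * (1 - 4/s)^2) := h1
      _ = 2 * (k:ℝ) * β^(k-1) * (1 - 4/s)^2 / s := by ring
    calc 2 * (k:ℝ) / s - 128 * (k:ℝ)^2 / d ^ ((3:ℝ)/4)
        ≤ 2 * (k:ℝ) / s - 16 * (k:ℝ)^2 / d := by linarith
    _ ≤ 2 * (k:ℝ) * β^(k-1) * (1 - 4/s)^2 / s := hmain
end
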